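/- Consider f(x; W) = b₀ − ⟨1, max(0, W₂ᵀ max(0, W₁ᵀx + b₁) + b₂)⟩ with W₂ having all entries ≤ 0. For a fixed binary vector a₂ ∈ {0,1}^{l₂}, define f₂(x; W, a₂) = b₀ − ⟨a₂, W₂ᵀ max(0, W₁ᵀx + b₁) + b₂⟩. Then f₂(x; W, a₂) ≥ f(x; W) for all x, and for fixed x and fixed (b₀, W₂, b₂), the map (W₁, b₁) ↦ f₂(x; W, a₂) is convex. -/

import Mathlib

private lemma convexOn_finset_sum {E : Type*} [AddCommGroup E] [Module ℝ E]
    {ι : Type*} (s : Finset ι) (f : ι → E → ℝ)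
    (h : ∀ i ∈ s, ConvexOn ℝ Set.univ (f i)) :
    ConvexOn ℝ Set.univ (fun x => ∑ i ∈ s, f i x) := by
  classical
  induction s using Finset.induction_on with
  | empty => simpa using convexOn_const (0 : ℝ) convex_univ
  | insert _ _ hx ih =>
    simp only [Finset.sum_insert hx]
    exact (h _ (Finset.mem_insert_self _ _)).add
      (ih fun i hi => h i (Finset.mem_insert_of_mem hi))

/-- For a two-hidden-layer sign-constrained network with `W₂ ⪯ 0` and a fixed binary
second-layer activation pattern `a₂`, the function `f₂` (replacing the second-layer
rectifiers by the pattern `a₂`) upper bounds `f`, and `f₂` is convex in `(W₁, b₁)` for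
fixed `x`, `b₀`, `W₂`, `b₂`. -/
theorem f2_upper_bound_and_convex (n l1 l2 : ℕ) (x : Fin n → ℝ) (b0 : ℝ)
    (W2 : Fin l1 → Fin l2 → ℝ) (b2 : Fin l2 → ℝ) (a2 : Fin l2 → ℝ)
    (hW2 : ∀ j i, W2 j i ≤ 0) (ha2 : ∀ i, a2 i = 0 ∨ a2 i = 1) :
    (∀ (W1 : Fin l1 → Fin n → ℝ) (b1 : Fin l1 → ℝ),
      b0 - ∑ i, max 0 ((∑ j, W2 j i * max 0 ((∑ k, W1 j k * x k) + b1 j)) + b2 i) ≤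
        b0 - ∑ i, a2 i * ((∑ j, W2 j i * max 0 ((∑ k, W1 j k * x k) + b1 j)) + b2 i)) ∧
    ConvexOn ℝ Set.univ
      (fun p : (Fin l1 → Fin n → ℝ) × (Fin l1 → ℝ) =>
        b0 - ∑ i, a2 i * ((∑ j, W2 j i * max 0 ((∑ k, p.1 j k * x k) + p.2 j)) + b2 i)) := by
  have key : ∀ (r : Fin l1 → ℝ),
      ∑ i, a2 i * ((∑ j, W2 j i * r j) + b2 i) =
      (∑ i, a2 i * b2 i) - ∑ j, (∑ i, -(a2 i * W2 j i)) * r j := by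
    intro r
    calc ∑ i, a2 i * ((∑ j, W2 j i * r j) + b2 i)
        = ∑ i, ((∑ j, a2 i * (W2 j i * r j)) + a2 i * b2 i) := by
          simp [mul_add, Finset.mul_sum]
      _ = (∑ i, ∑ j, a2 i * (W2 j i * r j)) + ∑ i, a2 i * b2 i := by
          rw [Finset.sum_add_distrib]
      _ = (∑ j, ∑ i, a2 i * (W2 j i * r j)) + ∑ i, a2 i * b2 i := by
          rw [Finset.sum_comm]
      _ = (∑ i, a2 i * b2 i) - ∑ j, (∑ i, -(a2 i * W2 j i)) * r j := by
          rw [show ∑ j, (∑ i, -(a2 i * W2 j i)) * r j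
              = -∑ j, ∑ i, a2 i * (W2 j i * r j) by
            simp [Finset.sum_mul, neg_mul, mul_assoc]]
          ring
  constructor
  · intro W1 b1
    have h : ∀ i ∈ (Finset.univ : Finset (Fin l2)),
        a2 i * ((∑ j, W2 j i * max 0 ((∑ k, W1 j k * x k) + b1 j)) + b2 i) ≤
        max 0 ((∑ j, W2 j i * max 0 ((∑ k, W1 j k * x k) + b1 j)) + b2 i) := by
      intro i _
      rcases ha2 i with h | h <;> simp [h, le_max_left, le_max_right]
    have := Finset.sum_le_sum h
    linarith
  · have hrew : (fun p : (Fin l1 → Fin n → ℝ) × (Fin l1 → ℝ) =>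
        b0 - ∑ i, a2 i * ((∑ j, W2 j i * max 0 ((∑ k, p.1 j k * x k) + p.2 j)) + b2 i)) =
        (fun p : (Fin l1 → Fin n → ℝ) × (Fin l1 → ℝ) =>
          (b0 - ∑ i, a2 i * b2 i) +
          ∑ j, (∑ i, -(a2 i * W2 j i)) * max 0 ((∑ k, p.1 j k * x k) + p.2 j)) := by
      funext p
      rw [key]
      ring
    rw [hrew]
    refine (convexOn_const _ convex_univ).add ?_
    refine convexOn_finset_sum _ _ (fun j _ => ?_)
    have hc : 0 ≤ ∑ i, -(a2 i * W2 j i) := by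
      refine Finset.sum_nonneg fun i _ => ?_
      rcases ha2 i with h | h
      · simp [h]
      · simpa [h] using hW2 j i
    have hlin : ConvexOn ℝ Set.univ
        (fun p : (Fin l1 → Fin n → ℝ) × (Fin l1 → ℝ) => (∑ k, p.1 j k * x k) + p.2 j) := by
      refine ⟨convex_univ, fun p _ q _ a b ha hb hab => le_of_eq ?_⟩
      simp only [Prod.fst_add, Prod.snd_add, Prod.smul_fst, Prod.smul_snd, Pi.add_apply,
        Pi.smul_apply, smul_eq_mul, add_mul, Finset.sum_add_distrib, Finset.mul_sum]
      ring_nf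
      simp [Finset.mul_sum, mul_assoc]
    have hmax : ConvexOn ℝ Set.univ
        (fun p : (Fin l1 → Fin n → ℝ) × (Fin l1 → ℝ) =>
          max 0 ((∑ k, p.1 j k * x k) + p.2 j)) :=
      (convexOn_const 0 convex_univ).sup hlin
    simpa [smul_eq_mul] using hmax.smul hc
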